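/- For every μ ∈ (0, 1) and every ρ ∈ (0, μ/(e−1)], one has Φ(μ, ρ) ≥ log(ρ/(μ+ρ)); equivalently, (1 − μ/(1+ρ))^{1/μ} ≥ ρ/(μ+ρ) whenever 0 < ρ ≤ μ/(e−1). -/

import Mathlib

/-- The function `Φ : [0,1] × (0,∞) → ℝ` from the paper, extended by the given
formulas to all of `ℝ × ℝ`. -/
noncomputable def Phi (μ ρ : ℝ) : ℝ :=
  if μ = 0 then -1 / (1 + ρ) else (1 / μ) * Real.log (1 - μ / (1 + ρ))

open Real Set


open Real

lemma taylor4 (x : ℝ) (hx : 0 ≤ x) : 1 + x + x^2/2 + x^3/6 + x^4/24 ≤ Real.exp x := by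
  have h := Real.sum_le_exp_of_nonneg hx 5
  simp [Finset.sum_range_succ, Nat.factorial] at h
  linarith

lemma keyK (μ : ℝ) (h0 : 0 ≤ μ) (h1 : μ ≤ 1) :
    Real.exp 1 - 1 + μ ≤ Real.exp μ * (Real.exp 1 - 1 - μ * (Real.exp 1 - 2)) := by
  have he1 : (2.7182818283 : ℝ) < Real.exp 1 := Real.exp_one_gt_d9
  have he2 : Real.exp 1 < 2.7182818286 := Real.exp_one_lt_d9
  have hpos : 0 < Real.exp 1 - 1 - μ * (Real.exp 1 - 2) := by nlinarith
  rcases le_or_gt μ 0.9 with hc | hc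
  · have ht : 1 + μ + μ^2/2 + μ^3/6 + μ^4/24 ≤ Real.exp μ := taylor4 μ h0
    obtain ⟨P, hP⟩ : ∃ P : ℝ, P = 1 + μ + μ^2/2 + μ^3/6 + μ^4/24 := ⟨_, rfl⟩
    rw [← hP] at ht
    have hprod := mul_le_mul_of_nonneg_right ht hpos.le
    have hid : P * (Real.exp 1 - 1 - μ * (Real.exp 1 - 2)) - (Real.exp 1 - 1 + μ)
        = (Real.exp 1 - 1) * (P * (1 - μ) - 1) + μ * (P - 1) := by ring
    have hneg : P * (1 - μ) - 1 ≤ 0 := by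
      have h5 : 0 ≤ μ^5 := pow_nonneg h0 5
      have h4 : 0 ≤ μ^4 := pow_nonneg h0 4
      have h3 : 0 ≤ μ^3 := pow_nonneg h0 3
      have h2 : 0 ≤ μ^2 := pow_nonneg h0 2
      have : P * (1 - μ) - 1 = -(μ^2/2 + μ^3/3 + μ^4/8 + μ^5/24) := by rw [hP]; ring
      rw [this]; linarith
    have hnum : (1.7182818286 : ℝ) * (P * (1 - μ) - 1) + μ * (P - 1) ≥ 0 := by
      nlinarith [mul_nonneg (mul_nonneg h0 h0) h0,
        mul_nonneg (mul_nonneg (mul_nonneg h0 h0) h0) h0,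
        mul_nonneg (mul_nonneg (mul_nonneg (mul_nonneg h0 h0) h0) h0) h0,
        mul_nonneg h0 (by linarith : (0:ℝ) ≤ 0.9 - μ),
        mul_nonneg (mul_nonneg h0 h0) (by linarith : (0:ℝ) ≤ 0.9 - μ),
        mul_nonneg (mul_nonneg (mul_nonneg h0 h0) h0) (by linarith : (0:ℝ) ≤ 0.9 - μ),
        mul_nonneg (mul_nonneg (mul_nonneg (mul_nonneg h0 h0) h0) h0) (by linarith : (0:ℝ) ≤ 0.9 - μ)]
    have h' : (1.7182818286:ℝ) * (P * (1 - μ) - 1) ≤ (Real.exp 1 - 1) * (P * (1 - μ) - 1) :=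
      mul_le_mul_of_nonpos_right (by linarith) hneg
    have hkey : (Real.exp 1 - 1) * (P * (1 - μ) - 1) + μ * (P - 1) ≥ 0 := by linarith
    linarith [hprod, hid, hkey]
  · have ht : Real.exp 1 * μ ≤ Real.exp μ := by
      have h3 := Real.add_one_le_exp (μ - 1)
      have h2 : Real.exp (μ - 1) * Real.exp 1 = Real.exp μ := by
        rw [← Real.exp_add]; ring_nf
      nlinarith [Real.exp_pos (1:ℝ)]
    have hprod := mul_le_mul_of_nonneg_right ht hpos.le
    have hfac : 0 ≤ Real.exp 1 * (Real.exp 1 - 2) * μ - (Real.exp 1 - 1) := by nlinarith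
    have hid : Real.exp 1 * μ * (Real.exp 1 - 1 - μ * (Real.exp 1 - 2)) - (Real.exp 1 - 1 + μ)
        = (1 - μ) * (Real.exp 1 * (Real.exp 1 - 2) * μ - (Real.exp 1 - 1)) := by ring
    nlinarith [mul_nonneg (sub_nonneg.2 h1) hfac]



lemma F_deriv (μ : ℝ) (hμ0 : 0 < μ) (hμ1 : μ < 1) (x : ℝ) (hx0 : 0 < x) (hxμ : x < μ) :
    HasDerivAt (fun r => Real.log (1 + r - μ) - Real.log (1 + r)
      + μ * (Real.log (μ + r) - Real.log r))
      (1/(1+x-μ) - 1/(1+x) + μ * (1/(μ+x) - 1/x)) x := by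
  have hA : 0 < 1 + x - μ := by linarith
  have hB : 0 < 1 + x := by linarith
  have hC : 0 < μ + x := by linarith
  have d1 : HasDerivAt (fun r : ℝ => 1 + r - μ) 1 x := by
    simpa using ((hasDerivAt_id x).const_add 1).sub_const μ
  have d2 : HasDerivAt (fun r : ℝ => 1 + r) 1 x := by
    simpa using (hasDerivAt_id x).const_add 1
  have d3 : HasDerivAt (fun r : ℝ => μ + r) 1 x := by
    simpa using (hasDerivAt_id x).const_add μ
  have l1 := d1.log hA.ne'
  have l2 := d2.log hB.ne'
  have l3 := d3.log hC.ne'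
  have l4 := (hasDerivAt_id x).log hx0.ne'
  have := ((l1.sub l2).add (((l3.sub l4)).const_mul μ))
  simp only [one_div] at this ⊢
  exact this

lemma F_deriv_neg (μ : ℝ) (hμ0 : 0 < μ) (hμ1 : μ < 1) (x : ℝ) (hx0 : 0 < x) (hxμ : x < μ) :
    1/(1+x-μ) - 1/(1+x) + μ * (1/(μ+x) - 1/x) < 0 := by
  have hA : 0 < 1 + x - μ := by linarith
  have hB : 0 < 1 + x := by linarith
  have hC : 0 < μ + x := by linarith
  have key : (μ + x) * x < μ * ((1 + x - μ) * (1 + x)) := by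
    have hid : μ * ((1 + x - μ) * (1 + x)) - (μ + x) * x
        = (1 - μ) * (μ * (1 + x) - x^2) := by ring
    nlinarith [mul_pos hx0 (show 0 < μ - x by linarith)]
  have hrw : 1/(1+x-μ) - 1/(1+x) + μ * (1/(μ+x) - 1/x)
      = (μ*((μ+x)*x) - μ*μ*((1+x-μ)*(1+x))) / ((1+x-μ)*(1+x)*((μ+x)*x)) := by
    field_simp
    ring
  rw [hrw]
  apply div_neg_of_neg_of_pos
  · nlinarith [mul_pos hμ0 (sub_pos.2 key)]
  · positivity

lemma F_strictAnti (μ : ℝ) (hμ0 : 0 < μ) (hμ1 : μ < 1) :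
    StrictAntiOn (fun r => Real.log (1 + r - μ) - Real.log (1 + r)
      + μ * (Real.log (μ + r) - Real.log r)) (Set.Ioo 0 μ) := by
  apply strictAntiOn_of_deriv_neg (convex_Ioo 0 μ)
  · apply ContinuousOn.add
    · apply ContinuousOn.sub
      · apply ContinuousOn.log (by fun_prop)
        intro x hx; obtain ⟨h1, h2⟩ := hx; intro h; nlinarith
      · apply ContinuousOn.log (by fun_prop)
        intro x hx; obtain ⟨h1, h2⟩ := hx; intro h; nlinarith
    · apply ContinuousOn.mul continuousOn_const
      apply ContinuousOn.sub
      · apply ContinuousOn.log (by fun_prop)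
        intro x hx; obtain ⟨h1, h2⟩ := hx; intro h; nlinarith
      · apply ContinuousOn.log (by fun_prop)
        intro x hx; obtain ⟨h1, h2⟩ := hx; intro h; nlinarith
  · intro x hx
    rw [interior_Ioo] at hx
    obtain ⟨hx0, hxμ⟩ := hx
    rw [(F_deriv μ hμ0 hμ1 x hx0 hxμ).deriv]
    exact F_deriv_neg μ hμ0 hμ1 x hx0 hxμ

lemma F_boundary (μ : ℝ) (hμ0 : 0 < μ) (hμ1 : μ < 1) :
    0 ≤ Real.log (1 + μ / (Real.exp 1 - 1) - μ) - Real.log (1 + μ / (Real.exp 1 - 1))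
      + μ * (Real.log (μ + μ / (Real.exp 1 - 1)) - Real.log (μ / (Real.exp 1 - 1))) := by
  have he1 : (2.7182818283 : ℝ) < Real.exp 1 := Real.exp_one_gt_d9
  have hem : (1 : ℝ) < Real.exp 1 - 1 := by linarith
  set ρ : ℝ := μ / (Real.exp 1 - 1) with hρdef
  have hρ0 : 0 < ρ := div_pos hμ0 (by linarith)
  have hμρ : μ = ρ * (Real.exp 1 - 1) := by
    rw [hρdef]; field_simp
  have hsum : μ + ρ = Real.exp 1 * ρ := by rw [hμρ]; ring
  have hlog : Real.log (μ + ρ) - Real.log ρ = 1 := by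
    rw [hsum, Real.log_mul (Real.exp_pos 1).ne' hρ0.ne', Real.log_exp]; ring
  rw [hlog, mul_one]
  have hA : 0 < 1 + ρ - μ := by nlinarith
  have hB : 0 < 1 + ρ := by linarith
  -- key inequality: 1 + ρ ≤ exp μ * (1 + ρ - μ)
  have hK := keyK μ hμ0.le hμ1.le
  have hkey : 1 + ρ ≤ Real.exp μ * (1 + ρ - μ) := by
    have e1 : (Real.exp 1 - 1) * (1 + ρ) = Real.exp 1 - 1 + μ := by rw [hμρ]; ring
    have e2 : (Real.exp 1 - 1) * (1 + ρ - μ) = Real.exp 1 - 1 - μ * (Real.exp 1 - 2) := by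
      rw [hμρ]; ring
    have h3 : (Real.exp 1 - 1) * (1 + ρ) ≤ Real.exp μ * ((Real.exp 1 - 1) * (1 + ρ - μ)) := by
      rw [e1, e2]; exact hK
    nlinarith [Real.exp_pos μ]
  have hlog2 : Real.log (1 + ρ) ≤ μ + Real.log (1 + ρ - μ) := by
    calc Real.log (1 + ρ) ≤ Real.log (Real.exp μ * (1 + ρ - μ)) :=
          Real.log_le_log hB hkey
      _ = μ + Real.log (1 + ρ - μ) := by
          rw [Real.log_mul (Real.exp_pos μ).ne' hA.ne', Real.log_exp]
  linarith

theorem Phi_ge_log_ratio (μ : ℝ) (hμ : μ ∈ Set.Ioo (0:ℝ) 1) (ρ : ℝ)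
    (hρ : ρ ∈ Set.Ioc (0:ℝ) (μ / (Real.exp 1 - 1))) :
    Phi μ ρ ≥ Real.log (ρ / (μ + ρ)) ∧ (1 - μ / (1 + ρ)) ^ (1 / μ) ≥ ρ / (μ + ρ) := by
  obtain ⟨hμ0, hμ1⟩ := hμ
  obtain ⟨hρ0, hρub⟩ := hρ
  have he1 : (2.7182818283 : ℝ) < Real.exp 1 := Real.exp_one_gt_d9
  have hρstar0 : 0 < μ / (Real.exp 1 - 1) := div_pos hμ0 (by linarith)
  have hρstarμ : μ / (Real.exp 1 - 1) < μ := by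
    rw [div_lt_iff₀ (by linarith)]; nlinarith
  have hρμ : ρ < μ := lt_of_le_of_lt hρub hρstarμ
  have hA : 0 < 1 + ρ - μ := by linarith
  have hB : 0 < 1 + ρ := by linarith
  have hC : 0 < μ + ρ := by linarith
  -- F ρ ≥ F ρ* ≥ 0
  have hFρ : 0 ≤ Real.log (1 + ρ - μ) - Real.log (1 + ρ)
      + μ * (Real.log (μ + ρ) - Real.log ρ) := by
    rcases eq_or_lt_of_le hρub with heq | hlt
    · rw [heq]; exact F_boundary μ hμ0 hμ1
    · have hmono := F_strictAnti μ hμ0 hμ1 ⟨hρ0, hρμ⟩ ⟨hρstar0, hρstarμ⟩ hlt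
      have := F_boundary μ hμ0 hμ1
      simp only at hmono
      linarith
  -- translate F ρ ≥ 0 into the log inequality
  have hbase : (0:ℝ) < 1 - μ / (1 + ρ) := by
    rw [sub_pos, div_lt_one hB]; linarith
  have hbeq : 1 - μ / (1 + ρ) = (1 + ρ - μ) / (1 + ρ) := by field_simp
  have hlogb : Real.log (1 - μ / (1 + ρ)) = Real.log (1 + ρ - μ) - Real.log (1 + ρ) := by
    rw [hbeq, Real.log_div hA.ne' hB.ne']
  have hlogr : Real.log (ρ / (μ + ρ)) = Real.log ρ - Real.log (μ + ρ) :=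
    Real.log_div hρ0.ne' hC.ne'
  have hmain : Real.log (ρ / (μ + ρ)) ≤ (1 / μ) * Real.log (1 - μ / (1 + ρ)) := by
    rw [hlogb, hlogr]
    have h := mul_le_mul_of_nonneg_left hFρ (le_of_lt (one_div_pos.2 hμ0))
    have hid : (1/μ) * (Real.log (1 + ρ - μ) - Real.log (1 + ρ)
        + μ * (Real.log (μ + ρ) - Real.log ρ))
        = (1/μ) * (Real.log (1 + ρ - μ) - Real.log (1 + ρ))
          + (Real.log (μ + ρ) - Real.log ρ) := by
      field_simp
    linarith [h, hid.symm.le, hid.le]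
  have hPhi : Phi μ ρ = (1 / μ) * Real.log (1 - μ / (1 + ρ)) := by
    rw [Phi, if_neg hμ0.ne']
  constructor
  · rw [hPhi]; exact hmain
  · have hrpow : (1 - μ / (1 + ρ)) ^ (1 / μ)
        = Real.exp (Real.log (1 - μ / (1 + ρ)) * (1 / μ)) :=
      Real.rpow_def_of_pos hbase _
    rw [ge_iff_le, hrpow]
    calc ρ / (μ + ρ) = Real.exp (Real.log (ρ / (μ + ρ))) :=
          (Real.exp_log (div_pos hρ0 hC)).symm
      _ ≤ Real.exp (Real.log (1 - μ / (1 + ρ)) * (1 / μ)) := by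
          apply Real.exp_le_exp.2
          rw [mul_comm]
          exact hmain
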